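/- Let r > 1 and set r' := r/(r-1), and let d ≥ 1. For every (m,w) ∈ ℝ × ℝ^d one has sup{ a·m + b·w : (a,b) ∈ ℝ × ℝ^d, a + (1/r')|b|^{r'} ≤ 0 } = ℓ_r(m,w) as extended reals; explicitly the supremum equals (1/r)|w|^r / m^{r-1} if m > 0, equals 0 if m = 0 and w = 0, and equals +∞ if m < 0 or (m = 0 and w ≠ 0). -/

import Mathlib

open MeasureTheory
open scoped RealInnerProductSpace Classical

/-- The function `ℓ_r : ℝ × ℝ^d → ℝ ∪ {+∞}`:
`ℓ_r(a,b) = (1/r)|b|^r / a^(r-1)` if `a > 0`, `0` if `(a,b) = (0,0)`, `+∞` otherwise. -/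
noncomputable def ell (r : ℝ) (d : ℕ) (a : ℝ) (b : EuclideanSpace ℝ (Fin d)) : EReal :=
  if 0 < a then (((1 / r) * ‖b‖ ^ r / a ^ (r - 1) : ℝ) : EReal)
  else if a = 0 ∧ b = 0 then 0
  else ⊤

/-- For `r > 1`, `r' := r/(r-1)` and `d ≥ 1`, for every `(m,w) ∈ ℝ × ℝ^d` one has
`sup{ a·m + b·w : a + (1/r')|b|^{r'} ≤ 0 } = ℓ_r(m,w)` as extended reals. -/
theorem stmt_0 (r : ℝ) (hr : 1 < r) (d : ℕ) (hd : 1 ≤ d)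
    (m : ℝ) (w : EuclideanSpace ℝ (Fin d)) :
    sSup ((fun p : ℝ × EuclideanSpace ℝ (Fin d) =>
        ((p.1 * m + ⟪p.2, w⟫ : ℝ) : EReal)) ''
      {p : ℝ × EuclideanSpace ℝ (Fin d) |
        p.1 + (1 / (r / (r - 1))) * ‖p.2‖ ^ (r / (r - 1)) ≤ 0}) = ell r d m w := by
  set r' := r / (r - 1) with hr'def
  have hpq : r.HolderConjugate r' := (Real.holderConjugate_iff_eq_conjExponent hr).2 rfl
  have hr0 : 0 < r := hpq.pos
  have hr'0 : 0 < r' := hpq.symm.pos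
  have hzero : ∀ t : ℝ, t ≤ 0 →
      (t, (0 : EuclideanSpace ℝ (Fin d))) ∈
        {p : ℝ × EuclideanSpace ℝ (Fin d) | p.1 + (1 / r') * ‖p.2‖ ^ r' ≤ 0} := by
    intro t ht
    simp only [Set.mem_setOf_eq, norm_zero, Real.zero_rpow hr'0.ne', mul_zero, add_zero]
    exact ht
  rcases lt_trichotomy m 0 with hm | hm | hm
  · -- m < 0 : sup = ⊤
    have hell : ell r d m w = ⊤ := by
      rw [ell, if_neg (not_lt.2 hm.le), if_neg (by rintro ⟨h1, -⟩; exact hm.ne h1)]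
    rw [hell, sSup_eq_top]
    intro x hx
    induction x using EReal.rec with
    | bot =>
      exact ⟨_, Set.mem_image_of_mem _ (hzero 0 le_rfl), EReal.bot_lt_coe _⟩
    | coe x =>
      set t : ℝ := max 0 ((x + 1 - ⟪(0 : EuclideanSpace ℝ (Fin d)), w⟫) / (-m)) with htdef
      refine ⟨_, Set.mem_image_of_mem _ (hzero (-t) (neg_nonpos.2 (le_max_left _ _))), ?_⟩
      rw [EReal.coe_lt_coe_iff]
      have h1 : (x + 1 - ⟪(0 : EuclideanSpace ℝ (Fin d)), w⟫) / (-m) ≤ t := le_max_right _ _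
      have h2 : x + 1 - ⟪(0 : EuclideanSpace ℝ (Fin d)), w⟫ ≤ t * (-m) :=
        (div_le_iff₀ (by linarith)).1 h1
      have h3 : -t * m = t * (-m) := by ring
      simp only [h3]
      linarith
    | top => exact absurd hx (lt_irrefl _)
  · -- m = 0
    subst hm
    by_cases hw : w = 0
    · subst hw
      have himg : ((fun p : ℝ × EuclideanSpace ℝ (Fin d) =>
          ((p.1 * 0 + ⟪p.2, (0 : EuclideanSpace ℝ (Fin d))⟫ : ℝ) : EReal)) ''
          {p : ℝ × EuclideanSpace ℝ (Fin d) | p.1 + (1 / r') * ‖p.2‖ ^ r' ≤ 0})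
          = {(0 : EReal)} := by
        apply Set.eq_singleton_iff_nonempty_unique_mem.2
        constructor
        · exact ⟨_, Set.mem_image_of_mem _ (hzero 0 le_rfl)⟩
        · rintro x ⟨p, -, rfl⟩
          simp
      rw [himg, csSup_singleton]
      simp [ell]
    · -- w ≠ 0 : sup = ⊤
      have hell : ell r d 0 w = ⊤ := by
        rw [ell, if_neg (lt_irrefl 0), if_neg (by rintro ⟨-, h2⟩; exact hw h2)]
      rw [hell, sSup_eq_top]
      intro x hx
      have hwn : 0 < ‖w‖ := norm_pos_iff.2 hw
      have hw2 : 0 < ⟪w, w⟫ := by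
        rw [real_inner_self_eq_norm_sq]; positivity
      induction x using EReal.rec with
      | bot =>
        exact ⟨_, Set.mem_image_of_mem _ (hzero 0 le_rfl), EReal.bot_lt_coe _⟩
      | coe x =>
        set t : ℝ := max 0 ((x + 1) / ⟪w, w⟫) with htdef
        have ht0 : 0 ≤ t := le_max_left _ _
        refine ⟨_, ⟨(-((1 / r') * ‖t • w‖ ^ r'), t • w), ?_, rfl⟩, ?_⟩
        · simp only [Set.mem_setOf_eq]
          linarith
        · rw [EReal.coe_lt_coe_iff]
          have h2 : x + 1 ≤ t * ⟪w, w⟫ := (div_le_iff₀ hw2).1 (le_max_right _ _)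
          have hin : ⟪t • w, w⟫ = t * ⟪w, w⟫ := real_inner_smul_left _ _ _
          simp only [hin, mul_zero]
          linarith
      | top => exact absurd hx (lt_irrefl _)
  · -- m > 0
    have hell : ell r d m w = (((1 / r) * ‖w‖ ^ r / m ^ (r - 1) : ℝ) : EReal) := by
      rw [ell, if_pos hm]
    rw [hell]
    set L : ℝ := (1 / r) * ‖w‖ ^ r / m ^ (r - 1) with hLdef
    have hrr' : r / r' = r - 1 := hpq.div_conj_eq_sub_one
    have hmr1 : (0:ℝ) < m ^ (r - 1) := Real.rpow_pos_of_pos hm _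
    have h1r : 1 / r = 1 - 1 / r' := by
      have := hpq.inv_add_inv_eq_inv
      rw [inv_one] at this
      rw [one_div, one_div]
      linarith
    apply le_antisymm
    · -- upper bound
      apply sSup_le
      rintro x ⟨⟨a, b⟩, hab, rfl⟩
      simp only [Set.mem_setOf_eq] at hab
      rw [EReal.coe_le_coe_iff]
      set c : ℝ := m ^ (r'⁻¹) with hcdef
      have hc0 : 0 < c := Real.rpow_pos_of_pos hm _
      have hyoung := Real.young_inequality_of_nonneg
        (div_nonneg (norm_nonneg w) hc0.le) (mul_nonneg (norm_nonneg b) hc0.le) hpq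
      have hcr' : c ^ r' = m := by
        rw [hcdef, ← Real.rpow_mul hm.le, inv_mul_cancel₀ hr'0.ne', Real.rpow_one]
      have hcr : c ^ r = m ^ (r - 1) := by
        rw [hcdef, ← Real.rpow_mul hm.le, inv_mul_eq_div, hrr']
      have e1 : (‖w‖ / c) ^ r = ‖w‖ ^ r / m ^ (r - 1) := by
        rw [Real.div_rpow (norm_nonneg w) hc0.le, hcr]
      have e2 : (‖b‖ * c) ^ r' = ‖b‖ ^ r' * m := by
        rw [Real.mul_rpow (norm_nonneg b) hc0.le, hcr']
      have e3 : ‖w‖ / c * (‖b‖ * c) = ‖b‖ * ‖w‖ := by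
        field_simp
      rw [e1, e2, e3] at hyoung
      have hbw : ⟪b, w⟫ ≤ ‖b‖ * ‖w‖ := real_inner_le_norm b w
      have ham : a * m ≤ -((1 / r') * ‖b‖ ^ r') * m := by
        apply mul_le_mul_of_nonneg_right _ hm.le
        linarith
      have hcancel : -((1 / r') * ‖b‖ ^ r') * m + ‖b‖ ^ r' * m / r' = 0 := by ring
      rw [hLdef]
      have : (1 : ℝ) / r * ‖w‖ ^ r / m ^ (r - 1) = ‖w‖ ^ r / m ^ (r - 1) / r := by ring
      rw [this]
      linarith
    · -- lower bound
      by_cases hw : w = 0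
      · subst hw
        have hL0 : L = 0 := by
          rw [hLdef]
          simp [Real.zero_rpow hr0.ne']
        rw [hL0]
        apply le_sSup
        refine ⟨(0, 0), hzero 0 le_rfl, ?_⟩
        norm_num
      · have hw0 : 0 < ‖w‖ := norm_pos_iff.2 hw
        set c2 : ℝ := ‖w‖ ^ (r - 2) / m ^ (r - 1) with hc2def
        have hc20 : 0 < c2 := div_pos (Real.rpow_pos_of_pos hw0 _) hmr1
        set b₀ : EuclideanSpace ℝ (Fin d) := c2 • w with hb0def
        set a₀ : ℝ := -((1 / r') * ‖b₀‖ ^ r') with ha0def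
        have hnb : ‖b₀‖ = ‖w‖ ^ (r - 1) / m ^ (r - 1) := by
          rw [hb0def, norm_smul, Real.norm_eq_abs, abs_of_pos hc20, hc2def,
            div_mul_eq_mul_div]
          congr 1
          rw [← Real.rpow_add_one hw0.ne']
          ring_nf
        have hbr' : ‖b₀‖ ^ r' = ‖w‖ ^ r / m ^ r := by
          rw [hnb, Real.div_rpow (Real.rpow_nonneg (norm_nonneg w) _) hmr1.le,
            ← Real.rpow_mul (norm_nonneg w), ← Real.rpow_mul hm.le,
            hpq.sub_one_mul_conj]
        have hinner : ⟪b₀, w⟫ = ‖w‖ ^ r / m ^ (r - 1) := by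
          rw [hb0def, real_inner_smul_left, real_inner_self_eq_norm_sq, hc2def,
            div_mul_eq_mul_div]
          congr 1
          rw [← Real.rpow_natCast ‖w‖ 2, ← Real.rpow_add hw0]
          norm_num
        have hmem : (a₀, b₀) ∈
            {p : ℝ × EuclideanSpace ℝ (Fin d) | p.1 + (1 / r') * ‖p.2‖ ^ r' ≤ 0} := by
          simp only [Set.mem_setOf_eq, ha0def]
          linarith
        have hmr : m ^ r = m ^ (r - 1) * m := by
          rw [← Real.rpow_add_one hm.ne']
          norm_num
        have hval : a₀ * m + ⟪b₀, w⟫ = L := by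
          rw [ha0def, hbr', hinner, hLdef, hmr, h1r]
          field_simp
          ring
        apply le_sSup
        exact ⟨(a₀, b₀), hmem, by dsimp only; exact_mod_cast hval⟩
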